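/- In a finitely injective K-bilinear space V, for any finite linearly independent vectors a₁, …, aₙ, a_{n+1} and any prescribed values λ₁, …, λ_{n+1} ∈ K, there exists b ∈ V with [b, a_i] = λ_i for all i ≤ n+1. In particular, no nonzero vector is orthogonal to all of V. -/

import Mathlib

universe u

/-- A bilinear space `(V, BV)` is finitely injective if every bilinear monomorphism from a
finite dimensional bilinear space `A` into `V` extends along any bilinear monomorphism
from `A` into a finite dimensional bilinear space `B`. -/
def FinitelyInjective (K : Type u) [Field K] (V : Type u) [AddCommGroup V] [Module K V]
    (BV : V →ₗ[K] V →ₗ[K] K) : Prop :=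
  ∀ (A B : Type u) [AddCommGroup A] [Module K A] [AddCommGroup B] [Module K B],
    ∀ (BA : A →ₗ[K] A →ₗ[K] K) (BB : B →ₗ[K] B →ₗ[K] K),
    FiniteDimensional K A → FiniteDimensional K B →
    ∀ ι : A →ₗ[K] B, Function.Injective ι → (∀ x y : A, BB (ι x) (ι y) = BA x y) →
    ∀ f : A →ₗ[K] V, Function.Injective f → (∀ x y : A, BV (f x) (f y) = BA x y) →
    ∃ g : B →ₗ[K] V, Function.Injective g ∧ (∀ x y : B, BV (g x) (g y) = BB x y) ∧
      g ∘ₗ ι = f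

/-- In a finitely injective bilinear space, any prescribed bilinear products against a
finite linearly independent family can be realised; in particular no nonzero vector is
orthogonal to all of `V`. -/
theorem finitelyInjective_realises_values
    {K : Type u} [Field K] {V : Type u} [AddCommGroup V] [Module K V]
    (BV : V →ₗ[K] V →ₗ[K] K) (hV : FinitelyInjective K V BV) :
    (∀ (n : ℕ) (a : Fin (n + 1) → V), LinearIndependent K a →
      ∀ lam : Fin (n + 1) → K, ∃ b : V, ∀ i : Fin (n + 1), BV b (a i) = lam i) ∧
    (∀ x : V, x ≠ 0 → ∃ b : V, BV b x ≠ 0) := by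
  have main : ∀ (n : ℕ) (a : Fin (n + 1) → V), LinearIndependent K a →
      ∀ lam : Fin (n + 1) → K, ∃ b : V, ∀ i : Fin (n + 1), BV b (a i) = lam i := by
    intro n a ha lam
    let A : Type u := Fin (n + 1) → K
    let f : A →ₗ[K] V := Fintype.linearCombination K a
    have hfa : ∀ c : A, f c = ∑ i, c i • a i := fun c => rfl
    have hf : Function.Injective f := by
      intro c d hcd
      have h0 : f (c - d) = 0 := by rw [map_sub, hcd, sub_self]
      have := Fintype.linearIndependent_iff.mp ha (c - d) (by rw [← hfa]; exact h0)
      funext i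
      have h2 := this i
      rw [Pi.sub_apply, sub_eq_zero] at h2
      exact h2
    let B : Type u := A × K
    let BA : A →ₗ[K] A →ₗ[K] K := BV.compl₁₂ f f
    let L : A →ₗ[K] K := Fintype.linearCombination K lam
    let BB : B →ₗ[K] B →ₗ[K] K :=
      BA.compl₁₂ (LinearMap.fst K A K) (LinearMap.fst K A K) +
      (LinearMap.mul K K).compl₁₂ (LinearMap.snd K A K) (L ∘ₗ LinearMap.fst K A K)
    let ι : A →ₗ[K] B := LinearMap.inl K A K
    obtain ⟨g, hginj, hgB, hgι⟩ := hV A B BA BB inferInstance inferInstance ι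
      LinearMap.inl_injective
      (fun x y => by
        show BA x y + 0 * L y = BA x y
        ring)
      f hf (fun x y => rfl)
    refine ⟨g (0, 1), fun i => ?_⟩
    have hai : a i = g (ι (Pi.single i 1)) := by
      have h1 := LinearMap.congr_fun hgι (Pi.single i 1)
      rw [LinearMap.comp_apply] at h1
      rw [h1, hfa]
      simp [Pi.single_apply]
    rw [hai, hgB]
    show BA 0 (Pi.single i 1) + 1 * L (Pi.single i 1) = lam i
    rw [map_zero, LinearMap.zero_apply, one_mul, zero_add]
    show Fintype.linearCombination K lam (Pi.single i 1) = lam i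
    simp
  refine ⟨main, fun x hx => ?_⟩
  have hli : LinearIndependent K (fun _ : Fin (0 + 1) => x) := by
    refine Fintype.linearIndependent_iff.mpr fun g hg i => ?_
    have huniv : (Finset.univ : Finset (Fin (0 + 1))) = {0} := by
      ext j; simp [Fin.eq_zero j]
    rw [huniv, Finset.sum_singleton] at hg
    rw [Fin.eq_zero i]
    by_contra h
    exact hx ((smul_eq_zero.mp hg).resolve_left h)
  obtain ⟨b, hb⟩ := main 0 (fun _ => x) hli (fun _ => 1)
  exact ⟨b, by simp [hb 0]⟩
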